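/- Let f = η · D where η is Schwartz on ℝⁿ with supp η̂ ⊆ [-1/(2a), 1/(2a)]ⁿ for some 0 < a ≤ 1/2, and D(x) = det_{1≤i,j≤n}[S(x_i - x_j)] with S the sinc function. Then the Fourier transform f̂(y) = 0 for all y outside the open cube (-1 - 1/(2a), 1 + 1/(2a))ⁿ. -/

import Mathlib

open MeasureTheory

noncomputable def S (x : ℝ) : ℝ :=
  if x = 0 then 1 else Real.sin (Real.pi * x) / (Real.pi * x)

lemma abs_S_le_one (u : ℝ) : |S u| ≤ 1 := by
  unfold S; split_ifs with h
  · norm_num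
  · rw [abs_div]
    exact div_le_one_of_le₀ Real.abs_sin_le_abs (abs_nonneg _)

lemma measurable_S : Measurable S := by
  unfold S
  exact Measurable.ite (by simpa using (measurableSet_singleton (0:ℝ)))
    measurable_const ((Real.measurable_sin.comp (measurable_const.mul measurable_id)).div
      (measurable_const.mul measurable_id))

lemma S_integral (u : ℝ) :
    (∫ τ : ℝ, Set.indicator (Set.Icc (-(1/2) : ℝ) (1/2))
      (fun τ : ℝ => Complex.exp (2 * (Real.pi : ℂ) * Complex.I * ((τ * u : ℝ) : ℂ))) τ)
      = (S u : ℂ) := by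
  rw [MeasureTheory.integral_indicator measurableSet_Icc,
    MeasureTheory.integral_Icc_eq_integral_Ioc,
    ← intervalIntegral.integral_of_le (by norm_num : (-(1/2) : ℝ) ≤ 1/2)]
  by_cases h : u = 0
  · subst h
    simp [S]
    norm_num
  · have hπ := Real.pi_ne_zero
    have hc : (2 * (Real.pi : ℂ) * Complex.I * (u : ℂ)) ≠ 0 := by
      simp [Real.pi_ne_zero, Complex.I_ne_zero, h]
    have hrw : ∀ τ : ℝ, (2 * (Real.pi : ℂ) * Complex.I * ((τ * u : ℝ) : ℂ))
        = (2 * (Real.pi : ℂ) * Complex.I * (u : ℂ)) * (τ : ℂ) := by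
      intro τ; push_cast; ring
    simp_rw [hrw]
    rw [integral_exp_mul_complex hc]
    have e1 : (2 * (Real.pi : ℂ) * Complex.I * (u : ℂ)) * ((1/2 : ℝ) : ℂ)
        = ((Real.pi * u : ℝ) : ℂ) * Complex.I := by push_cast; ring
    have e2 : (2 * (Real.pi : ℂ) * Complex.I * (u : ℂ)) * ((-(1/2) : ℝ) : ℂ)
        = -(((Real.pi * u : ℝ) : ℂ)) * Complex.I := by push_cast; ring
    rw [e1, e2]
    have hsin : Complex.exp (((Real.pi * u : ℝ) : ℂ) * Complex.I)
        - Complex.exp (-(((Real.pi * u : ℝ) : ℂ)) * Complex.I)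
        = 2 * Complex.sin ((Real.pi * u : ℝ) : ℂ) * Complex.I := by
      rw [Complex.sin]
      linear_combination (Complex.exp ((((Real.pi * u : ℝ) : ℂ)) * Complex.I)
        - Complex.exp (-((Real.pi * u : ℝ) : ℂ) * Complex.I)) * Complex.I_sq
    rw [hsin, S, if_neg h]
    have hπu : ((Real.pi * u : ℝ) : ℂ) ≠ 0 := by
      simp [Real.pi_ne_zero, h]
    rw [Complex.ofReal_div, div_eq_div_iff hc hπu]
    push_cast
    ring

noncomputable def Fker (n : ℕ) (η : SchwartzMap (Fin n → ℝ) ℂ) (ξ : Fin n → ℝ) : ℂ :=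
  ∫ x : Fin n → ℝ, η x *
    Complex.exp (-(2 * (Real.pi : ℂ) * Complex.I * (∑ i, x i * ξ i : ℝ)))

noncomputable def Lsum (n : ℕ) : (Fin n → ℝ) →ₗ[ℝ] (Fin n → ℝ) →ₗ[ℝ] ℝ :=
  LinearMap.mk₂ ℝ (fun x ξ => ∑ i, x i * ξ i)
    (fun x x' ξ => by simp [add_mul, Finset.sum_add_distrib])
    (fun c x ξ => by simp [Finset.mul_sum, mul_assoc])
    (fun x ξ ξ' => by simp [mul_add, Finset.sum_add_distrib])
    (fun c x ξ => by simp [Finset.mul_sum]; congr 1; ext i; ring)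

lemma continuous_Fker (n : ℕ) (η : SchwartzMap (Fin n → ℝ) ℂ) :
    Continuous (Fker n η) := by
  have heq : Fker n η = VectorFourier.fourierIntegral Real.fourierChar volume (Lsum n) (⇑η) := by
    ext ξ
    unfold Fker VectorFourier.fourierIntegral
    congr 1; ext x
    rw [Circle.smul_def, Real.fourierChar_apply, mul_comm]
    have harg : -(2 * (Real.pi : ℂ) * Complex.I * ((∑ i, x i * ξ i : ℝ) : ℂ))
        = ((2 * Real.pi * -((Lsum n) x ξ) : ℝ) : ℂ) * Complex.I := by
      show _ = ((2 * Real.pi * -(∑ i, x i * ξ i) : ℝ) : ℂ) * Complex.I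
      push_cast; ring
    rw [harg, smul_eq_mul]
  rw [heq]
  refine VectorFourier.fourierIntegral_continuous Real.continuous_fourierChar ?_ η.integrable
  show Continuous fun p : (Fin n → ℝ) × (Fin n → ℝ) => ∑ i, p.1 i * p.2 i
  exact continuous_finset_sum _ fun i _ =>
    ((continuous_apply i).comp continuous_fst).mul ((continuous_apply i).comp continuous_snd)

lemma Fker_eq_zero {a : ℝ} (ha : 0 < a) (n : ℕ) (η : SchwartzMap (Fin n → ℝ) ℂ)
    (hsupp : ∀ ξ : Fin n → ℝ, Fker n η ξ ≠ 0 →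
      ∀ i, ξ i ∈ Set.Icc (-(1/(2*a))) (1/(2*a)))
    (ξ : Fin n → ℝ) (i : Fin n) (hξ : 1/(2*a) ≤ |ξ i|) : Fker n η ξ = 0 := by
  have hpos : (0:ℝ) < 1/(2*a) := by positivity
  have strict : ∀ ζ : Fin n → ℝ, 1/(2*a) < |ζ i| → Fker n η ζ = 0 := by
    intro ζ hζ
    by_contra hne
    have h1 := hsupp ζ hne i
    rw [Set.mem_Icc] at h1
    have : |ζ i| ≤ 1/(2*a) := abs_le.2 ⟨by linarith [h1.1], h1.2⟩
    linarith
  have h1 : Filter.Tendsto (fun k : ℕ => (1 + 1/(k+1) : ℝ)) Filter.atTop (nhds 1) := by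
    simpa using ((tendsto_one_div_add_atTop_nhds_zero_nat (𝕜 := ℝ)).const_add 1)
  have htend : Filter.Tendsto (fun k : ℕ => (1 + 1/(k+1) : ℝ) • ξ) Filter.atTop (nhds ξ) := by
    simpa using h1.smul (tendsto_const_nhds (x := ξ))
  have hzero : ∀ k : ℕ, Fker n η ((1 + 1/(k+1) : ℝ) • ξ) = 0 := by
    intro k
    apply strict
    have hk : (0:ℝ) < 1/((k:ℝ)+1) := by positivity
    have habs : |((1 + 1/(k+1) : ℝ) • ξ) i| = (1 + 1/(k+1)) * |ξ i| := by
      rw [Pi.smul_apply, smul_eq_mul, abs_mul, abs_of_pos (by positivity)]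
    rw [habs]
    nlinarith
  have hFt := ((continuous_Fker n η).tendsto ξ).comp htend
  have h0 : Filter.Tendsto (fun k : ℕ => Fker n η ((1 + 1/(k+1) : ℝ) • ξ))
      Filter.atTop (nhds 0) := by
    simp only [hzero]; exact tendsto_const_nhds
  exact tendsto_nhds_unique hFt h0

lemma perm_term_zero (n : ℕ) (η : SchwartzMap (Fin n → ℝ) ℂ) (σ : Equiv.Perm (Fin n))
    (y : Fin n → ℝ) (i₀ : Fin n) (c : ℝ) (hc : 0 < c)
    (hvan : ∀ ξ : Fin n → ℝ, c ≤ |ξ i₀| → Fker n η ξ = 0)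
    (hy : 1 + c ≤ |y i₀|) :
    (∫ x : Fin n → ℝ, (η x * ∏ i, (S (x (σ i) - x i) : ℂ)) *
      Complex.exp (-(2 * (Real.pi : ℂ) * Complex.I * (∑ i, x i * y i : ℝ)))) = 0 := by
  classical
  set I2 : Set ℝ := Set.Icc (-(1/2) : ℝ) (1/2) with hI2
  set f : (Fin n → ℝ) → (Fin n → ℝ) → ℂ := fun x t =>
    (∏ i, Set.indicator I2 (1 : ℝ → ℂ) (t i)) *
      (η x * Complex.exp (-(2 * (Real.pi : ℂ) * Complex.I *
        ((∑ i, x i * (y i - (t (σ.symm i) - t i)) : ℝ) : ℂ)))) with hf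
  -- Claim 1 : inner t-integral recovers the sinc product
  have claim1 : ∀ x : Fin n → ℝ, (∫ t : Fin n → ℝ, f x t)
      = (η x * ∏ i, (S (x (σ i) - x i) : ℂ)) *
        Complex.exp (-(2 * (Real.pi : ℂ) * Complex.I * (∑ i, x i * y i : ℝ))) := by
    intro x
    have hpt : ∀ t : Fin n → ℝ, f x t
        = (η x * Complex.exp (-(2 * (Real.pi : ℂ) * Complex.I * (∑ i, x i * y i : ℝ)))) *
          ∏ i, Set.indicator I2
            (fun τ : ℝ => Complex.exp (2 * (Real.pi : ℂ) * Complex.I *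
              ((τ * (x (σ i) - x i) : ℝ) : ℂ))) (t i) := by
      intro t
      by_cases hmem : ∀ i, t i ∈ I2
      · have l1 : (∏ i, Set.indicator I2 (1 : ℝ → ℂ) (t i)) = 1 := by
          rw [Finset.prod_eq_one]
          intro i _
          rw [Set.indicator_of_mem (hmem i)]; rfl
        have l2 : (∏ i, Set.indicator I2
            (fun τ : ℝ => Complex.exp (2 * (Real.pi : ℂ) * Complex.I *
              ((τ * (x (σ i) - x i) : ℝ) : ℂ))) (t i))
            = ∏ i, Complex.exp (2 * (Real.pi : ℂ) * Complex.I *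
              ((t i * (x (σ i) - x i) : ℝ) : ℂ)) :=
          Finset.prod_congr rfl fun i _ => Set.indicator_of_mem (hmem i) _
        have hsum : ∑ i, x (σ i) * t i = ∑ i, x i * t (σ.symm i) := by
          have h := Equiv.sum_comp σ (fun i => x i * t (σ.symm i))
          simpa using h
        have hreal : (∑ i, x i * (y i - (t (σ.symm i) - t i)))
            = (∑ i, x i * y i) - ∑ i, t i * (x (σ i) - x i) := by
          have e1 : ∀ i, x i * (y i - (t (σ.symm i) - t i))
              = x i * y i - x i * t (σ.symm i) + x i * t i := by intro i; ring
          have e2 : ∀ i, t i * (x (σ i) - x i) = x (σ i) * t i - x i * t i := by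
            intro i; ring
          simp_rw [e1, e2, Finset.sum_add_distrib, Finset.sum_sub_distrib, hsum]
          ring
        have hexp : Complex.exp (-(2 * (Real.pi : ℂ) * Complex.I *
            ((∑ i, x i * (y i - (t (σ.symm i) - t i)) : ℝ) : ℂ)))
            = Complex.exp (-(2 * (Real.pi : ℂ) * Complex.I * (∑ i, x i * y i : ℝ))) *
              ∏ i, Complex.exp (2 * (Real.pi : ℂ) * Complex.I *
                ((t i * (x (σ i) - x i) : ℝ) : ℂ)) := by
          have hprod : (∏ i, Complex.exp (2 * (Real.pi : ℂ) * Complex.I *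
              ((t i * (x (σ i) - x i) : ℝ) : ℂ)))
              = Complex.exp (2 * (Real.pi : ℂ) * Complex.I *
                ((∑ i, t i * (x (σ i) - x i) : ℝ) : ℂ)) := by
            rw [← Complex.exp_sum]
            congr 1
            push_cast
            rw [Finset.mul_sum]
          rw [hprod, ← Complex.exp_add]
          congr 1
          rw [hreal]
          push_cast
          ring
        rw [hf]
        simp only []
        rw [l1, one_mul, l2, hexp]
        ring
      · push_neg at hmem
        obtain ⟨j, hj⟩ := hmem
        rw [hf]
        simp only []
        rw [Finset.prod_eq_zero (Finset.mem_univ j) (Set.indicator_of_notMem hj _),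
          Finset.prod_eq_zero (Finset.mem_univ j) (Set.indicator_of_notMem hj _),
          zero_mul, mul_zero]
    calc (∫ t : Fin n → ℝ, f x t)
        = ∫ t : Fin n → ℝ,
            (η x * Complex.exp (-(2 * (Real.pi : ℂ) * Complex.I * (∑ i, x i * y i : ℝ)))) *
            ∏ i, Set.indicator I2
              (fun τ : ℝ => Complex.exp (2 * (Real.pi : ℂ) * Complex.I *
                ((τ * (x (σ i) - x i) : ℝ) : ℂ))) (t i) := by
          exact integral_congr_ae (Filter.Eventually.of_forall hpt)
      _ = (η x * Complex.exp (-(2 * (Real.pi : ℂ) * Complex.I * (∑ i, x i * y i : ℝ)))) *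
            ∫ t : Fin n → ℝ, ∏ i, Set.indicator I2
              (fun τ : ℝ => Complex.exp (2 * (Real.pi : ℂ) * Complex.I *
                ((τ * (x (σ i) - x i) : ℝ) : ℂ))) (t i) := integral_const_mul _ _
      _ = (η x * Complex.exp (-(2 * (Real.pi : ℂ) * Complex.I * (∑ i, x i * y i : ℝ)))) *
            ∏ i, (S (x (σ i) - x i) : ℂ) := by
          rw [MeasureTheory.integral_fintype_prod_volume_eq_prod (ι := Fin n)
            (f := fun i (τ : ℝ) => Set.indicator I2
              (fun τ : ℝ => Complex.exp (2 * (Real.pi : ℂ) * Complex.I *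
                ((τ * (x (σ i) - x i) : ℝ) : ℂ))) τ)]
          congr 1
          exact Finset.prod_congr rfl fun i _ => S_integral _
      _ = _ := by ring
  -- Claim 2 : inner x-integral vanishes
  have claim2 : ∀ t : Fin n → ℝ, (∫ x : Fin n → ℝ, f x t) = 0 := by
    intro t
    have : (∫ x : Fin n → ℝ, f x t)
        = (∏ i, Set.indicator I2 (1 : ℝ → ℂ) (t i)) *
          Fker n η (fun i => y i - (t (σ.symm i) - t i)) := integral_const_mul _ _
    rw [this]
    by_cases hmem : ∀ i, t i ∈ I2
    · have ht : ∀ j, |t j| ≤ 1/2 := by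
        intro j
        have := hmem j
        rw [hI2, Set.mem_Icc] at this
        exact abs_le.2 ⟨by linarith [this.1], this.2⟩
      have hb : c ≤ |y i₀ - (t (σ.symm i₀) - t i₀)| := by
        have h1 : |t (σ.symm i₀) - t i₀| ≤ 1 := by
          have := abs_sub (t (σ.symm i₀)) (t i₀)
          have := ht (σ.symm i₀); have := ht i₀
          calc |t (σ.symm i₀) - t i₀| ≤ |t (σ.symm i₀)| + |t i₀| := abs_sub _ _
            _ ≤ 1 := by linarith [ht (σ.symm i₀), ht i₀]
        have h2 := abs_sub_abs_le_abs_sub (y i₀) (t (σ.symm i₀) - t i₀)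
        linarith
      rw [hvan _ hb, mul_zero]
    · push_neg at hmem
      obtain ⟨j, hj⟩ := hmem
      rw [Finset.prod_eq_zero (Finset.mem_univ j) (Set.indicator_of_notMem hj _), zero_mul]
  -- Integrability on the product space
  have hint : Integrable (Function.uncurry f) (volume.prod volume) := by
    have hind : Integrable (Set.indicator I2 (1 : ℝ → ℝ)) volume :=
      (integrable_indicator_iff measurableSet_Icc).2
        ((integrableOn_const_iff).2 (Or.inr measure_Icc_lt_top))
    have hmeasC : Measurable fun p : (Fin n → ℝ) × (Fin n → ℝ) =>
        (∏ i, Set.indicator I2 (1 : ℝ → ℂ) (p.2 i)) :=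
      Finset.measurable_prod _ fun i _ =>
        (measurable_const.indicator measurableSet_Icc).comp'
          ((measurable_pi_apply i).comp' measurable_snd)
    have hcont : Continuous fun p : (Fin n → ℝ) × (Fin n → ℝ) =>
        η p.1 * Complex.exp (-(2 * (Real.pi : ℂ) * Complex.I *
          ((∑ i, p.1 i * (y i - (p.2 (σ.symm i) - p.2 i)) : ℝ) : ℂ))) := by
      apply Continuous.mul
      · exact η.continuous.comp continuous_fst
      · apply Complex.continuous_exp.comp
        apply Continuous.neg
        apply Continuous.mul continuous_const
        apply Complex.continuous_ofReal.comp
        apply continuous_finset_sum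
        intro i _
        exact ((continuous_apply i).comp continuous_fst).mul
          (continuous_const.sub ((((continuous_apply (σ.symm i)).comp continuous_snd)).sub
            ((continuous_apply i).comp continuous_snd)))
    have hmeas : AEStronglyMeasurable (Function.uncurry f) (volume.prod volume) :=
      (hmeasC.mul hcont.measurable).aestronglyMeasurable
    refine Integrable.mono'
      (g := fun p : (Fin n → ℝ) × (Fin n → ℝ) =>
        ‖η p.1‖ * ∏ i, Set.indicator I2 (1 : ℝ → ℝ) (p.2 i)) ?_ hmeas
      (Filter.Eventually.of_forall ?_)
    · exact (η.integrable.norm).mul_prod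
        (Integrable.fintype_prod (f := fun (_ : Fin n) (τ : ℝ) =>
          Set.indicator I2 (1 : ℝ → ℝ) τ) (fun i => hind))
    · intro p
      rw [Function.uncurry]
      rw [norm_mul, norm_mul]
      have h1 : ‖∏ i, Set.indicator I2 (1 : ℝ → ℂ) (p.2 i)‖
          = ∏ i, Set.indicator I2 (1 : ℝ → ℝ) (p.2 i) := by
        rw [norm_prod]
        exact Finset.prod_congr rfl fun i _ => by
          by_cases h : p.2 i ∈ I2 <;> simp [h]
      have h2 : ‖Complex.exp (-(2 * (Real.pi : ℂ) * Complex.I *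
          ((∑ i, p.1 i * (y i - (p.2 (σ.symm i) - p.2 i)) : ℝ) : ℂ)))‖ = 1 := by
        have harg : -(2 * (Real.pi : ℂ) * Complex.I *
            ((∑ i, p.1 i * (y i - (p.2 (σ.symm i) - p.2 i)) : ℝ) : ℂ))
            = ((-(2 * Real.pi * (∑ i, p.1 i * (y i - (p.2 (σ.symm i) - p.2 i)))) : ℝ) : ℂ)
              * Complex.I := by push_cast; ring
        rw [harg, Complex.norm_exp_ofReal_mul_I]
      rw [h1, h2, mul_one]
      exact le_of_eq (mul_comm _ _)
  -- Put everything together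
  have hswap := MeasureTheory.integral_integral_swap (f := f) hint
  calc (∫ x : Fin n → ℝ, (η x * ∏ i, (S (x (σ i) - x i) : ℂ)) *
      Complex.exp (-(2 * (Real.pi : ℂ) * Complex.I * (∑ i, x i * y i : ℝ))))
      = ∫ x : Fin n → ℝ, ∫ t : Fin n → ℝ, f x t :=
        (integral_congr_ae (Filter.Eventually.of_forall fun x => (claim1 x).symm))
    _ = ∫ t : Fin n → ℝ, ∫ x : Fin n → ℝ, f x t := hswap
    _ = 0 := by
        rw [integral_congr_ae (Filter.Eventually.of_forall claim2)]
        simp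

theorem product_bandlimited (a : ℝ) (ha : 0 < a) (ha2 : a ≤ 1/2)
    (n : ℕ) (η : SchwartzMap (Fin n → ℝ) ℂ)
    (hsupp : ∀ ξ : Fin n → ℝ,
      (∫ x : Fin n → ℝ, η x *
        Complex.exp (-(2 * (Real.pi : ℂ) * Complex.I * (∑ i, x i * ξ i : ℝ)))) ≠ 0 →
      ∀ i, ξ i ∈ Set.Icc (-(1/(2*a))) (1/(2*a)))
    (y : Fin n → ℝ)
    (hy : y ∉ Set.univ.pi fun _ : Fin n =>
      Set.Ioo (-(1 + 1/(2*a))) (1 + 1/(2*a))) :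
    (∫ x : Fin n → ℝ,
      (η x * ((Matrix.of fun i j => S (x i - x j)).det : ℝ)) *
        Complex.exp (-(2 * (Real.pi : ℂ) * Complex.I * (∑ i, x i * y i : ℝ)))) = 0 := by
  classical
  set c : ℝ := 1/(2*a) with hcdef
  have hc : 0 < c := by positivity
  -- extract a bad coordinate
  obtain ⟨i₀, hi₀⟩ : ∃ i, y i ∉ Set.Ioo (-(1 + c)) (1 + c) := by
    by_contra h
    push_neg at h
    exact hy (fun i _ => h i)
  have hyi : 1 + c ≤ |y i₀| := by
    rw [Set.mem_Ioo] at hi₀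
    push_neg at hi₀
    rcases lt_or_ge (-(1 + c)) (y i₀) with h | h
    · exact le_trans (hi₀ h) (le_abs_self _)
    · calc 1 + c ≤ -(y i₀) := by linarith
        _ ≤ |y i₀| := neg_le_abs _
  have hvan : ∀ ξ : Fin n → ℝ, c ≤ |ξ i₀| → Fker n η ξ = 0 := fun ξ hξ =>
    Fker_eq_zero ha n η hsupp ξ i₀ hξ
  -- expand the determinant
  have hdet : ∀ x : Fin n → ℝ, (((Matrix.of fun i j => S (x i - x j)).det : ℝ) : ℂ)
      = ∑ σ : Equiv.Perm (Fin n),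
          ((Equiv.Perm.sign σ : ℤ) : ℂ) * ∏ i, (S (x (σ i) - x i) : ℂ) := by
    intro x
    rw [Matrix.det_apply]
    push_cast
    exact Finset.sum_congr rfl fun σ _ => by
      rw [Units.smul_def, zsmul_eq_mul]
      push_cast
      simp [Matrix.of_apply]
  have hsplit : ∀ x : Fin n → ℝ,
      (η x * (((Matrix.of fun i j => S (x i - x j)).det : ℝ) : ℂ)) *
        Complex.exp (-(2 * (Real.pi : ℂ) * Complex.I * (∑ i, x i * y i : ℝ)))
      = ∑ σ : Equiv.Perm (Fin n), ((Equiv.Perm.sign σ : ℤ) : ℂ) *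
          ((η x * ∏ i, (S (x (σ i) - x i) : ℂ)) *
            Complex.exp (-(2 * (Real.pi : ℂ) * Complex.I * (∑ i, x i * y i : ℝ)))) := by
    intro x
    rw [hdet x, Finset.mul_sum, Finset.sum_mul]
    exact Finset.sum_congr rfl fun σ _ => by ring
  have hexp1 : ∀ x : Fin n → ℝ,
      ‖Complex.exp (-(2 * (Real.pi : ℂ) * Complex.I * (∑ i, x i * y i : ℝ)))‖ = 1 := by
    intro x
    have harg : -(2 * (Real.pi : ℂ) * Complex.I * ((∑ i, x i * y i : ℝ) : ℂ))
        = ((-(2 * Real.pi * (∑ i, x i * y i)) : ℝ) : ℂ) * Complex.I := by push_cast; ring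
    rw [harg, Complex.norm_exp_ofReal_mul_I]
  have hSint : ∀ σ : Equiv.Perm (Fin n), Integrable (fun x : Fin n → ℝ =>
      ((Equiv.Perm.sign σ : ℤ) : ℂ) * ((η x * ∏ i, (S (x (σ i) - x i) : ℂ)) *
        Complex.exp (-(2 * (Real.pi : ℂ) * Complex.I * (∑ i, x i * y i : ℝ))))) volume := by
    intro σ
    apply Integrable.const_mul
    have hmeas : AEStronglyMeasurable (fun x : Fin n → ℝ =>
        (η x * ∏ i, (S (x (σ i) - x i) : ℂ)) *
          Complex.exp (-(2 * (Real.pi : ℂ) * Complex.I * (∑ i, x i * y i : ℝ)))) volume := by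
      refine Measurable.aestronglyMeasurable ?_
      refine ((η.continuous.measurable).mul ?_).mul ?_
      · exact Finset.measurable_prod _ fun i _ =>
          Complex.measurable_ofReal.comp' (measurable_S.comp'
            ((measurable_pi_apply (σ i)).sub (measurable_pi_apply i)))
      · refine (Complex.continuous_exp.comp ?_).measurable
        refine Continuous.neg (Continuous.mul continuous_const ?_)
        exact Complex.continuous_ofReal.comp (continuous_finset_sum _ fun i _ =>
          (continuous_apply i).mul continuous_const)
    refine Integrable.mono' η.integrable.norm hmeas (Filter.Eventually.of_forall ?_)
    intro x
    rw [norm_mul, norm_mul, hexp1 x, mul_one]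
    have h1 : ‖∏ i, (S (x (σ i) - x i) : ℂ)‖ ≤ 1 := by
      rw [norm_prod]
      refine Finset.prod_le_one (fun i _ => norm_nonneg _) (fun i _ => ?_)
      rw [Complex.norm_real, Real.norm_eq_abs]
      exact abs_S_le_one _
    exact mul_le_of_le_one_right (norm_nonneg _) h1
  calc (∫ x : Fin n → ℝ,
      (η x * ((Matrix.of fun i j => S (x i - x j)).det : ℝ)) *
        Complex.exp (-(2 * (Real.pi : ℂ) * Complex.I * (∑ i, x i * y i : ℝ))))
      = ∫ x : Fin n → ℝ, ∑ σ : Equiv.Perm (Fin n), ((Equiv.Perm.sign σ : ℤ) : ℂ) *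
          ((η x * ∏ i, (S (x (σ i) - x i) : ℂ)) *
            Complex.exp (-(2 * (Real.pi : ℂ) * Complex.I * (∑ i, x i * y i : ℝ)))) :=
        integral_congr_ae (Filter.Eventually.of_forall hsplit)
    _ = ∑ σ : Equiv.Perm (Fin n), ∫ x : Fin n → ℝ, ((Equiv.Perm.sign σ : ℤ) : ℂ) *
          ((η x * ∏ i, (S (x (σ i) - x i) : ℂ)) *
            Complex.exp (-(2 * (Real.pi : ℂ) * Complex.I * (∑ i, x i * y i : ℝ)))) :=
        integral_finset_sum _ fun σ _ => hSint σ
    _ = 0 := by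
        refine Finset.sum_eq_zero fun σ _ => ?_
        rw [integral_const_mul, perm_term_zero n η σ y i₀ c hc hvan hyi, mul_zero]
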